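/- Let T be a self-adjoint linear endomorphism of V. Then T ∘ T ∘ T = 0 if and only if there exists a null vector l ∈ V such that the range of T is contained in {l}⊥ and T maps {l}⊥ into the line ℝ·l spanned by l. -/

import Mathlib

section aux
variable {V : Type*} [AddCommGroup V] [Module ℝ V] {n : ℕ}

private def eps {n : ℕ} (i : Fin n) : ℝ := if (i : ℕ) = 0 then -1 else 1

private lemma gsum (g : V →ₗ[ℝ] V →ₗ[ℝ] ℝ) (b : Module.Basis (Fin n) ℝ V)
    (hb : ∀ i j : Fin n, g (b i) (b j) =
      if i = j then (if (i : ℕ) = 0 then (-1 : ℝ) else 1) else 0)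
    (x y : V) :
    g x y = ∑ i, eps i * (b.repr x i) * (b.repr y i) := by
  conv_lhs => rw [← b.sum_repr x, ← b.sum_repr y]
  simp only [map_sum, map_smul, LinearMap.sum_apply, LinearMap.smul_apply, smul_eq_mul, hb]
  refine Finset.sum_congr rfl fun i _ => ?_
  simp only [mul_ite, mul_zero, Finset.sum_ite_eq', Finset.mem_univ, if_true, eps]
  split <;> ring

private lemma sumsq (hn : 2 ≤ n) (d : Fin n → ℝ) (h0 : d ⟨0, by omega⟩ = 0)
    (hs : ∑ i, eps i * d i * d i = 0) : ∀ i, d i = 0 := by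
  have hsq : ∑ i, d i * d i = 0 := by
    rw [← hs]
    refine Finset.sum_congr rfl fun i _ => ?_
    by_cases h : (i : ℕ) = 0
    · have : i = ⟨0, by omega⟩ := Fin.ext h
      simp [this, h0]
    · simp [eps, h]
  intro i
  have := (Finset.sum_eq_zero_iff_of_nonneg (fun i _ => mul_self_nonneg (d i))).mp hsq i
    (Finset.mem_univ i)
  exact mul_self_eq_zero.mp this

/-- Lorentzian: null l ≠ 0, g l w = 0, g w w = 0 ⇒ w ∈ ℝl. -/
private lemma key (hn : 2 ≤ n) (g : V →ₗ[ℝ] V →ₗ[ℝ] ℝ) (b : Module.Basis (Fin n) ℝ V)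
    (hb : ∀ i j : Fin n, g (b i) (b j) =
      if i = j then (if (i : ℕ) = 0 then (-1 : ℝ) else 1) else 0)
    (l w : V) (hl : l ≠ 0) (hll : g l l = 0) (hlw : g l w = 0) (hww : g w w = 0) :
    ∃ c : ℝ, w = c • l := by
  set i0 : Fin n := ⟨0, by omega⟩ with hi0
  set L : Fin n → ℝ := fun i => b.repr l i with hL
  set W : Fin n → ℝ := fun i => b.repr w i with hW
  have hll' : ∑ i, eps i * L i * L i = 0 := by rw [← gsum g b hb]; exact hll
  have hlw' : ∑ i, eps i * L i * W i = 0 := by rw [← gsum g b hb]; exact hlw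
  have hww' : ∑ i, eps i * W i * W i = 0 := by rw [← gsum g b hb]; exact hww
  have hL0 : L i0 ≠ 0 := by
    intro h0
    apply hl
    have hall : ∀ i, L i = 0 := sumsq hn L h0 hll'
    have : b.repr l = 0 := by ext i; exact hall i
    simpa using congrArg b.repr.symm this
  set t : ℝ := W i0 / L i0 with ht
  set d : Fin n → ℝ := fun i => W i - t * L i with hd
  have hd0 : d i0 = 0 := by
    simp only [hd, ht]
    field_simp
    simp
  have hds : ∑ i, eps i * d i * d i = 0 := by
    have expand : ∀ i, eps i * d i * d i =
        (eps i * W i * W i) - t * (eps i * L i * W i) - t * (eps i * L i * W i)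
          + t * (t * (eps i * L i * L i)) := fun i => by simp only [hd]; ring
    simp only [expand, Finset.sum_add_distrib, Finset.sum_sub_distrib, ← Finset.mul_sum,
      hll', hlw', hww']
    ring
  have hall : ∀ i, d i = 0 := sumsq hn d hd0 hds
  refine ⟨t, ?_⟩
  apply b.repr.injective
  ext i
  have := hall i
  simp only [hd] at this
  simp only [map_smul, Finsupp.smul_apply, smul_eq_mul]
  linarith [this]

private lemma nondeg (g : V →ₗ[ℝ] V →ₗ[ℝ] ℝ) (b : Module.Basis (Fin n) ℝ V)
    (hb : ∀ i j : Fin n, g (b i) (b j) =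
      if i = j then (if (i : ℕ) = 0 then (-1 : ℝ) else 1) else 0)
    (v : V) (h : ∀ x, g v x = 0) : v = 0 := by
  have hv : ∀ i, b.repr v i = 0 := by
    intro i
    have := h (b i)
    rw [gsum g b hb] at this
    simp only [Module.Basis.repr_self, Finsupp.single_apply, mul_ite, mul_one, mul_zero,
      Finset.sum_ite_eq, Finset.mem_univ, if_true] at this
    have heps : eps i ≠ 0 := by unfold eps; split <;> norm_num
    exact (mul_eq_zero.mp this).resolve_left heps
  have : b.repr v = 0 := by ext i; exact hv i
  simpa using congrArg b.repr.symm this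

end aux

/-- For a self-adjoint endomorphism `T` of a Lorentzian vector space `(V, g)`,
`T ∘ T ∘ T = 0` iff there exists a null vector `l` such that the range of `T` is contained in
`{l}⊥` and `T` maps `{l}⊥` into the line `ℝ • l`. -/
theorem stmt1 {V : Type*} [AddCommGroup V] [Module ℝ V]
    {n : ℕ} (hn : 2 ≤ n)
    (g : V →ₗ[ℝ] V →ₗ[ℝ] ℝ)
    (hg_symm : ∀ x y : V, g x y = g y x)
    (b : Module.Basis (Fin n) ℝ V)
    (hb : ∀ i j : Fin n, g (b i) (b j) =
      if i = j then (if (i : ℕ) = 0 then (-1 : ℝ) else 1) else 0)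
    (T : V →ₗ[ℝ] V)
    (hT : ∀ x y : V, g (T x) y = g x (T y)) :
    T ∘ₗ T ∘ₗ T = 0 ↔
      ∃ l : V, l ≠ 0 ∧ g l l = 0 ∧ (∀ x : V, g l (T x) = 0) ∧
        (∀ w : V, g l w = 0 → ∃ c : ℝ, T w = c • l) := by
  constructor
  · intro h
    have h3 : ∀ x, T (T (T x)) = 0 := fun x => by
      have := LinearMap.ext_iff.mp h x
      simpa using this
    by_cases hT2 : ∀ x, T (T x) = 0
    · by_cases hT0 : ∀ x, T x = 0
      · -- T = 0
        have h01 : (⟨0, by omega⟩ : Fin n) ≠ ⟨1, by omega⟩ := by simp [Fin.ext_iff]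
        refine ⟨b ⟨0, by omega⟩ + b ⟨1, by omega⟩, ?_, ?_, ?_, ?_⟩
        · intro h0
          have h1 : b.repr (b ⟨0, by omega⟩ + b ⟨1, by omega⟩) ⟨0, by omega⟩ = 1 := by
            simp [Module.Basis.repr_self, Finsupp.single_apply, h01.symm]
          rw [h0] at h1
          simp at h1
        · simp [map_add, hb, h01, h01.symm]
        · intro x; rw [hT0 x]; simp
        · intro w _; exact ⟨0, by rw [hT0 w]; simp⟩
      · push_neg at hT0
        obtain ⟨x0, hx0⟩ := hT0
        have hnull : g (T x0) (T x0) = 0 := by rw [hT, hT2 x0]; simp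
        have horth : ∀ x, g (T x0) (T x) = 0 := fun x => by rw [hT, hT2 x]; simp
        refine ⟨T x0, hx0, hnull, horth, fun w _ => ?_⟩
        exact key hn g b hb (T x0) (T w) hx0 hnull (horth w)
          (by rw [hT, hT2 w]; simp)
    · push_neg at hT2
      obtain ⟨v, hv⟩ := hT2
      have hnull : g (T (T v)) (T (T v)) = 0 := by rw [hT, h3 v]; simp
      have horth : ∀ x, g (T (T v)) (T x) = 0 := fun x => by rw [hT, hT, h3 x]; simp
      refine ⟨T (T v), hv, hnull, horth, fun w hw => ?_⟩
      obtain ⟨c, hc⟩ : ∃ c : ℝ, T (T w) = c • T (T v) :=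
        key hn g b hb (T (T v)) (T (T w)) hv hnull (horth (T w))
          (by rw [hT, h3 w]; simp)
      have hTwnull : g (T w) (T w) = 0 := by
        rw [hT, hc, map_smul, smul_eq_mul, hg_symm, hw, mul_zero]
      exact key hn g b hb (T (T v)) (T w) hv hnull (horth w) hTwnull
  · rintro ⟨l, hl0, hll, hrange, hmaps⟩
    have hTl : T l = 0 :=
      nondeg g b hb (T l) (fun x => (hT l x).trans (hrange x))
    ext x
    obtain ⟨c, hc⟩ := hmaps (T x) (hrange x)
    simp only [LinearMap.comp_apply, LinearMap.zero_apply]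
    rw [hc, map_smul, hTl, smul_zero]
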